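/- Let c1, c3 > 0, q > 1, and t0 ≤ t1, and let y : [t0, t1] → ℝ be differentiable with y(t) > 0 for all t ∈ [t0, t1] and y′(t) ≤ −c1 · y(t) − c3 · y(t)^q for all t ∈ [t0, t1]. Then y(t1)^{1−q} ≥ (y(t0)^{1−q} + c3/c1) · e^{c1(q−1)(t1 − t0)} − c3/c1. -/

import Mathlib

theorem stmt_8 (c1 c3 q t0 t1 : ℝ) (hc1 : 0 < c1) (hc3 : 0 < c3) (hq : 1 < q) (ht : t0 ≤ t1)
    (y : ℝ → ℝ)
    (hypos : ∀ t ∈ Set.Icc t0 t1, 0 < y t)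
    (hdiff : ∀ t ∈ Set.Icc t0 t1, DifferentiableAt ℝ y t)
    (hy' : ∀ t ∈ Set.Icc t0 t1, deriv y t ≤ -c1 * y t - c3 * y t ^ q) :
    y t1 ^ (1 - q) ≥ (y t0 ^ (1 - q) + c3 / c1) * Real.exp (c1 * (q - 1) * (t1 - t0)) - c3 / c1 := by
  set K : ℝ := c3 / c1 with hK
  set a : ℝ := c1 * (q - 1) with ha
  have ha0 : 0 < a := by rw [ha]; nlinarith
  set g : ℝ → ℝ := fun t => (y t ^ (1 - q) + K) * Real.exp (-(a * (t - t0))) with hg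
  set G : ℝ → ℝ := fun t =>
    (deriv y t * (1 - q) * y t ^ (1 - q - 1)) * Real.exp (-(a * (t - t0))) +
      (y t ^ (1 - q) + K) * (-a * Real.exp (-(a * (t - t0)))) with hG
  have hExp : ∀ t : ℝ, HasDerivAt (fun s => Real.exp (-(a * (s - t0))))
      (-a * Real.exp (-(a * (t - t0)))) t := by
    intro t
    have h1 : HasDerivAt (fun s : ℝ => -(a * (s - t0))) (-a) t := by
      have : HasDerivAt (fun s : ℝ => s - t0) 1 t := (hasDerivAt_id t).sub_const t0
      have h2 := (this.const_mul a).neg; rw [mul_one] at h2; exact h2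
    simpa [mul_comm] using h1.exp
  have hgderiv : ∀ t ∈ Set.Icc t0 t1, HasDerivAt g (G t) t := by
    intro t htm
    have hy : HasDerivAt y (deriv y t) t := (hdiff t htm).hasDerivAt
    have hz : HasDerivAt (fun s => y s ^ (1 - q) + K)
        (deriv y t * (1 - q) * y t ^ (1 - q - 1)) t := by
      have := hy.rpow_const (p := 1 - q) (Or.inl (ne_of_gt (hypos t htm)))
      simpa using this.add_const K
    exact hz.mul (hExp t)
  have hGnn : ∀ t ∈ Set.Icc t0 t1, 0 ≤ G t := by
    intro t htm
    have hyp := hypos t htm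
    have hE : 0 < Real.exp (-(a * (t - t0))) := Real.exp_pos _
    have hpow : (0:ℝ) < y t ^ (1 - q - 1) := Real.rpow_pos_of_pos hyp _
    -- key inequality on the bracket
    have key : a * (y t ^ (1 - q) + K) ≤ deriv y t * (1 - q) * y t ^ (1 - q - 1) := by
      have h1 : deriv y t * (1 - q) ≥ (-c1 * y t - c3 * y t ^ q) * (1 - q) := by
        have h1q : (1 - q) < 0 := by linarith
        nlinarith [hy' t htm]
      have h2 : (-c1 * y t - c3 * y t ^ q) * (1 - q) * y t ^ (1 - q - 1)
          = a * (y t ^ (1 - q) + K) := by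
        have e1 : y t * y t ^ (1 - q - 1) = y t ^ (1 - q) := by
          nth_rewrite 1 [← Real.rpow_one (y t)]
          rw [← Real.rpow_add hyp]
          norm_num [sub_eq_add_neg]
        have e2 : y t ^ q * y t ^ (1 - q - 1) = 1 := by
          rw [← Real.rpow_add hyp]
          norm_num [sub_eq_add_neg]
        have eK : a * K = c3 * (q - 1) := by
          rw [hK, ha]; linear_combination (q - 1) * c3 * mul_inv_cancel₀ hc1.ne'
        calc (-c1 * y t - c3 * y t ^ q) * (1 - q) * y t ^ (1 - q - 1)
            = (q - 1) * c1 * (y t * y t ^ (1 - q - 1))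
              + (q - 1) * c3 * (y t ^ q * y t ^ (1 - q - 1)) := by ring
          _ = a * y t ^ (1 - q) + a * K := by rw [e1, e2, eK]; ring
          _ = a * (y t ^ (1 - q) + K) := by ring
      calc a * (y t ^ (1 - q) + K)
          = (-c1 * y t - c3 * y t ^ q) * (1 - q) * y t ^ (1 - q - 1) := h2.symm
        _ ≤ deriv y t * (1 - q) * y t ^ (1 - q - 1) := by
            exact mul_le_mul_of_nonneg_right h1 hpow.le
    have : G t = (deriv y t * (1 - q) * y t ^ (1 - q - 1) - a * (y t ^ (1 - q) + K))
        * Real.exp (-(a * (t - t0))) := by simp [hG]; ring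
    rw [this]
    have : 0 ≤ deriv y t * (1 - q) * y t ^ (1 - q - 1) - a * (y t ^ (1 - q) + K) := by
      linarith
    positivity
  have hmono : MonotoneOn g (Set.Icc t0 t1) := by
    apply monotoneOn_of_deriv_nonneg (convex_Icc t0 t1)
    · intro t htm
      exact (hgderiv t htm).continuousAt.continuousWithinAt
    · intro t htm
      rw [interior_Icc] at htm
      exact ((hgderiv t (Set.Ioo_subset_Icc_self htm)).differentiableAt).differentiableWithinAt
    · intro t htm
      rw [interior_Icc] at htm
      rw [(hgderiv t (Set.Ioo_subset_Icc_self htm)).deriv]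
      exact hGnn t (Set.Ioo_subset_Icc_self htm)
  have hle : g t0 ≤ g t1 :=
    hmono (Set.left_mem_Icc.mpr ht) (Set.right_mem_Icc.mpr ht) ht
  have hg0 : g t0 = y t0 ^ (1 - q) + K := by simp [hg]
  have hg1 : g t1 = (y t1 ^ (1 - q) + K) * Real.exp (-(a * (t1 - t0))) := by simp [hg]
  rw [hg0, hg1] at hle
  have hEpos : 0 < Real.exp (a * (t1 - t0)) := Real.exp_pos _
  rw [Real.exp_neg, ← div_eq_mul_inv, le_div_iff₀ hEpos] at hle
  linarith
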